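/- For every a ∈ ℂ with a² ≠ 4, the quotient ring ℂ[x,y]/(4x³ + 2axy³, 3ax²y² + 6y⁵) is a finite-dimensional ℂ-vector space of dimension 15. -/

import Mathlib

open MvPolynomial

noncomputable section
namespace W10

def d (u v : ℕ) : Fin 2 →₀ ℕ := Finsupp.single 0 u + Finsupp.single 1 v

lemma dn (n : Fin 2 →₀ ℕ) : d (n 0) (n 1) = n := by
  ext x; fin_cases x <;> simp [d, Finsupp.single_apply]

lemma d_injIff {x y u v : ℕ} : d x y = d u v ↔ x = u ∧ y = v := by
  constructor
  · intro h
    refine ⟨?_, ?_⟩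
    · have := congrArg (fun m : Fin 2 →₀ ℕ => m 0) h
      simpa [d, Finsupp.single_apply] using this
    · have := congrArg (fun m : Fin 2 →₀ ℕ => m 1) h
      simpa [d, Finsupp.single_apply] using this
  · rintro ⟨rfl, rfl⟩; rfl

lemma d_apply0 (u v : ℕ) : d u v 0 = u := by simp [d, Finsupp.single_apply]
lemma d_apply1 (u v : ℕ) : d u v 1 = v := by simp [d, Finsupp.single_apply]

lemma n_eq_d (n : Fin 2 →₀ ℕ) {u v : ℕ} : n = d u v ↔ n 0 = u ∧ n 1 = v := by
  rw [← dn n, d_injIff]; simp [dn]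

lemma mono1 (p q : ℕ) : X 0 ^ p * X 1 ^ q = monomial (d p q) (1 : ℂ) := by
  rw [X_pow_eq_monomial, X_pow_eq_monomial, monomial_mul, mul_one]; rfl

lemma mono_d (u v : ℕ) (t : ℂ) :
    (monomial (d u v) t : MvPolynomial (Fin 2) ℂ) = C t * (X 0 ^ u * X 1 ^ v) := by
  rw [mono1, C_mul_monomial, mul_one]

variable (a : ℂ)

def f : MvPolynomial (Fin 2) ℂ := (4 : MvPolynomial (Fin 2) ℂ) * X 0 ^ 3 + 2 * C a * X 0 * X 1 ^ 3
def g : MvPolynomial (Fin 2) ℂ := 3 * C a * X 0 ^ 2 * X 1 ^ 2 + 6 * X 1 ^ 5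

lemma f_eq : f a = monomial (d 3 0) 4 + monomial (d 1 3) (2 * a) := by
  rw [f, mono_d, mono_d]; simp only [map_mul, map_ofNat]; ring

lemma g_eq : g a = monomial (d 2 2) (3 * a) + monomial (d 0 5) 6 := by
  rw [g, mono_d, mono_d]; simp only [map_mul, map_ofNat]; ring

lemma Cf (A : MvPolynomial (Fin 2) ℂ) (u v : ℕ) :
    coeff (d u v) (A * f a) =
      4 * coeff (d (u - 3) v) A * (if 3 ≤ u then 1 else 0) +
      2 * a * coeff (d (u - 1) (v - 3)) A * (if 1 ≤ u ∧ 3 ≤ v then 1 else 0) := by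
  induction A using MvPolynomial.induction_on' with
  | monomial n t =>
    rw [f_eq, mul_add, monomial_mul, monomial_mul, coeff_add]
    simp only [coeff_monomial, n_eq_d, Finsupp.add_apply, d_apply0, d_apply1]
    split_ifs <;> (first | ring1 | (exfalso; omega))
  | add p q hp hq =>
    rw [add_mul, coeff_add, hp, hq, coeff_add, coeff_add]; ring

lemma Cg (B : MvPolynomial (Fin 2) ℂ) (u v : ℕ) :
    coeff (d u v) (B * g a) =
      3 * a * coeff (d (u - 2) (v - 2)) B * (if 2 ≤ u ∧ 2 ≤ v then 1 else 0) +
      6 * coeff (d u (v - 5)) B * (if 5 ≤ v then 1 else 0) := by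
  induction B using MvPolynomial.induction_on' with
  | monomial n t =>
    rw [g_eq, mul_add, monomial_mul, monomial_mul, coeff_add]
    simp only [coeff_monomial, n_eq_d, Finsupp.add_apply, d_apply0, d_apply1]
    split_ifs <;> (first | ring1 | (exfalso; omega))
  | add p q hp hq =>
    rw [add_mul, coeff_add, hp, hq, coeff_add, coeff_add]; ring

def I : Ideal (MvPolynomial (Fin 2) ℂ) := Ideal.span {f a, g a}

local notation "mk" => Ideal.Quotient.mk (I a)

lemma mkC (t : ℂ) (q : MvPolynomial (Fin 2) ℂ) : mk (C t * q) = t • mk q := by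
  rw [← smul_eq_C_mul, ← Ideal.Quotient.mkₐ_eq_mk ℂ, map_smul]

lemma hf0 : mk (f a) = 0 :=
  Ideal.Quotient.eq_zero_iff_mem.mpr (Ideal.subset_span (by simp))

lemma hg0 : mk (g a) = 0 :=
  Ideal.Quotient.eq_zero_iff_mem.mpr (Ideal.subset_span (by simp))

lemma r1 (p : MvPolynomial (Fin 2) ℂ) :
    mk (X 0 ^ 3 * p) = (-(a/2)) • mk (X 0 * X 1 ^ 3 * p) := by
  have key : f a * p = C 4 * (X 0 ^ 3 * p) + C (2 * a) * (X 0 * X 1 ^ 3 * p) := by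
    rw [f]; simp only [map_mul, map_ofNat]; ring
  have h := congrArg mk key
  rw [map_mul, hf0, zero_mul, map_add, mkC, mkC] at h
  have h2 : ((4:ℂ) • mk (X 0 ^ 3 * p)) = (-(2*a)) • mk (X 0 * X 1 ^ 3 * p) := by
    rw [neg_smul, eq_neg_iff_add_eq_zero]; exact h.symm
  calc mk (X 0 ^ 3 * p) = (1/4 : ℂ) • ((4:ℂ) • mk (X 0 ^ 3 * p)) := by
        rw [smul_smul]; norm_num
    _ = (-(a/2)) • mk (X 0 * X 1 ^ 3 * p) := by rw [h2, smul_smul]; congr 1; ring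

lemma r2 (p : MvPolynomial (Fin 2) ℂ) :
    mk (X 1 ^ 5 * p) = (-(a/2)) • mk (X 0 ^ 2 * X 1 ^ 2 * p) := by
  have key : g a * p = C 6 * (X 1 ^ 5 * p) + C (3 * a) * (X 0 ^ 2 * X 1 ^ 2 * p) := by
    rw [g]; simp only [map_mul, map_ofNat]; ring
  have h := congrArg mk key
  rw [map_mul, hg0, zero_mul, map_add, mkC, mkC] at h
  have h2 : ((6:ℂ) • mk (X 1 ^ 5 * p)) = (-(3*a)) • mk (X 0 ^ 2 * X 1 ^ 2 * p) := by
    rw [neg_smul, eq_neg_iff_add_eq_zero]; exact h.symm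
  calc mk (X 1 ^ 5 * p) = (1/6 : ℂ) • ((6:ℂ) • mk (X 1 ^ 5 * p)) := by
        rw [smul_smul]; norm_num
    _ = (-(a/2)) • mk (X 0 ^ 2 * X 1 ^ 2 * p) := by
        rw [h2, smul_smul]; congr 1; ring

variable {a} in
lemma r3 (ha : a ^ 2 ≠ 4) (p : MvPolynomial (Fin 2) ℂ) : mk (X 0 * X 1 ^ 5 * p) = 0 := by
  have key : C (6*a^2 - 24) * (X 0 * X 1 ^ 5 * p) =
      (C (3*a) * X 1 ^ 2 * p) * f a + (C (-4) * X 0 * p) * g a := by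
    rw [f, g]; simp only [map_sub, map_mul, map_pow, map_ofNat, map_neg]; ring
  have t1 : mk ((C (3*a) * X 1 ^ 2 * p) * f a) = 0 := by rw [map_mul, hf0, mul_zero]
  have t2 : mk ((C (-4) * X 0 * p) * g a) = 0 := by rw [map_mul, hg0, mul_zero]
  have h := congrArg mk key
  rw [map_add, t1, t2, add_zero, mkC] at h
  have hne : (6*a^2 - 24 : ℂ) ≠ 0 := by
    intro h0; apply ha; linear_combination h0 / 6
  have hinv : mk (X 0 * X 1 ^ 5 * p) =
      (6*a^2 - 24)⁻¹ • ((6*a^2 - 24) • mk (X 0 * X 1 ^ 5 * p)) := by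
    rw [smul_smul, inv_mul_cancel₀ hne, one_smul]
  rw [hinv, h, smul_zero]

def bb : Fin 3 × Fin 5 → (MvPolynomial (Fin 2) ℂ ⧸ I a) :=
  fun ij => mk (X 0 ^ (ij.1 : ℕ) * X 1 ^ (ij.2 : ℕ))

lemma mem_basis {i j : ℕ} (hi : i < 3) (hj : j < 5) :
    mk (X 0 ^ i * X 1 ^ j) ∈ Submodule.span ℂ (Set.range (bb a)) :=
  Submodule.subset_span ⟨(⟨i, hi⟩, ⟨j, hj⟩), rfl⟩

variable {a} in
lemma mono_mem (ha : a ^ 2 ≠ 4) :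
    ∀ i j : ℕ, mk (X 0 ^ i * X 1 ^ j) ∈ Submodule.span ℂ (Set.range (bb a)) := by
  intro i
  induction i using Nat.strong_induction_on with
  | _ i ih =>
    intro j
    by_cases h3 : 3 ≤ i
    · obtain ⟨k, rfl⟩ : ∃ k, i = k + 3 := ⟨i - 3, by omega⟩
      have e1 : mk (X 0 ^ (k+3) * X 1 ^ j) = mk (X 0 ^ 3 * (X 0 ^ k * X 1 ^ j)) := by
        exact congrArg _ (by ring)
      have e2 : mk (X 0 * X 1 ^ 3 * (X 0 ^ k * X 1 ^ j)) = mk (X 0 ^ (k+1) * X 1 ^ (j+3)) := by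
        exact congrArg _ (by ring)
      rw [e1, r1, e2]
      exact Submodule.smul_mem _ _ (ih (k+1) (by omega) (j+3))
    · by_cases h5 : j ≤ 4
      · exact mem_basis a (by omega) (by omega)
      · by_cases h1 : 1 ≤ i
        · obtain ⟨k, rfl⟩ : ∃ k, i = k + 1 := ⟨i - 1, by omega⟩
          obtain ⟨l, rfl⟩ : ∃ l, j = l + 5 := ⟨j - 5, by omega⟩
          have e1 : mk (X 0 ^ (k+1) * X 1 ^ (l+5)) = mk (X 0 * X 1 ^ 5 * (X 0 ^ k * X 1 ^ l)) := by
            exact congrArg _ (by ring)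
          rw [e1, r3 ha]
          exact Submodule.zero_mem _
        · have hi0 : i = 0 := by omega
          subst hi0
          obtain ⟨l, rfl⟩ : ∃ l, j = l + 5 := ⟨j - 5, by omega⟩
          have e1 : mk (X 0 ^ 0 * X 1 ^ (l+5)) = mk (X 1 ^ 5 * X 1 ^ l) := by
            exact congrArg _ (by ring)
          have e2 : mk (X 0 ^ 2 * X 1 ^ 2 * X 1 ^ l) = mk (X 0 ^ 2 * X 1 ^ (l+2)) := by
            exact congrArg _ (by ring)
          rw [e1, r2, e2]
          by_cases hl : l + 2 ≤ 4
          · exact Submodule.smul_mem _ _ (mem_basis a (by omega) (by omega))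
          · have h0 : mk (X 0 ^ 2 * X 1 ^ (l+2)) = 0 := by
              have e3 : mk (X 0 ^ 2 * X 1 ^ (l+2)) =
                  mk (X 0 * X 1 ^ 5 * (X 0 * X 1 ^ (l-3))) := by
                refine congrArg _ ?_
                have : l + 2 = 5 + (l - 3) := by omega
                rw [this]; ring
              rw [e3, r3 ha]
            rw [h0, smul_zero]
            exact Submodule.zero_mem _

variable {a} in
lemma span_top (ha : a ^ 2 ≠ 4) : ⊤ ≤ Submodule.span ℂ (Set.range (bb a)) := by
  intro x hx
  clear hx
  obtain ⟨p, rfl⟩ := Ideal.Quotient.mk_surjective x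
  induction p using MvPolynomial.induction_on' with
  | monomial n t =>
    rw [← dn n, mono_d, mkC]
    exact Submodule.smul_mem _ _ (mono_mem ha _ _)
  | add p q hp hq =>
    rw [map_add]; exact Submodule.add_mem _ hp hq

variable {a} in
lemma indep : LinearIndependent ℂ (bb a) := by
  rw [Fintype.linearIndependent_iff]
  intro c hc
  set P : MvPolynomial (Fin 2) ℂ :=
    ∑ ij : Fin 3 × Fin 5, C (c ij) * (X 0 ^ (ij.1 : ℕ) * X 1 ^ (ij.2 : ℕ)) with hPdef
  have hmkP : mk P = 0 := by
    rw [hPdef, map_sum]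
    simp_rw [mkC]
    exact hc
  obtain ⟨A, B, hAB⟩ := Ideal.mem_span_pair.mp (Ideal.Quotient.eq_zero_iff_mem.mp hmkP)
  have L1 : ∀ i : Fin 3 × Fin 5, coeff (d (i.1 : ℕ) (i.2 : ℕ)) P = c i := by
    intro i
    rw [hPdef, coeff_sum]
    have hterm : ∀ ij : Fin 3 × Fin 5,
        coeff (d (i.1 : ℕ) (i.2 : ℕ)) (C (c ij) * (X 0 ^ (ij.1 : ℕ) * X 1 ^ (ij.2 : ℕ)))
          = if ij = i then c ij else 0 := by
      intro ij
      rw [coeff_C_mul, mono1, coeff_monomial]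
      by_cases h : ij = i
      · subst h; rw [if_pos rfl, if_pos rfl, mul_one]
      · rw [if_neg h, if_neg, mul_zero]
        rw [d_injIff]
        intro ⟨h1, h2⟩
        exact h (Prod.ext (Fin.val_injective h1) (Fin.val_injective h2))
    rw [Finset.sum_congr rfl fun ij _ => hterm ij, Finset.sum_ite_eq' Finset.univ i c]
    simp
  have L2 : ∀ u v : ℕ, 3 ≤ u ∨ 5 ≤ v → coeff (d u v) P = 0 := by
    intro u v huv
    rw [hPdef, coeff_sum]
    refine Finset.sum_eq_zero fun ij _ => ?_
    rw [coeff_C_mul, mono1, coeff_monomial, if_neg, mul_zero]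
    rw [d_injIff]
    have h1 := ij.1.isLt
    have h2 := ij.2.isLt
    omega
  have key : ∀ u v : ℕ, coeff (d u v) P =
      (4 * coeff (d (u - 3) v) A * (if 3 ≤ u then 1 else 0) +
        2 * a * coeff (d (u - 1) (v - 3)) A * (if 1 ≤ u ∧ 3 ≤ v then 1 else 0)) +
      (3 * a * coeff (d (u - 2) (v - 2)) B * (if 2 ≤ u ∧ 2 ≤ v then 1 else 0) +
        6 * coeff (d u (v - 5)) B * (if 5 ≤ v then 1 else 0)) := by
    intro u v
    rw [← hAB, coeff_add, Cf, Cg]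
  -- auxiliary vanishing of low coefficients of A and B
  have e30 : coeff (d 0 0) A = 0 := by
    have h := key 3 0; rw [L2 3 0 (by omega)] at h; norm_num at h
    exact h
  have e31 : coeff (d 0 1) A = 0 := by
    have h := key 3 1; rw [L2 3 1 (by omega)] at h; norm_num at h
    exact h
  have e40 : coeff (d 1 0) A = 0 := by
    have h := key 4 0; rw [L2 4 0 (by omega)] at h; norm_num at h
    exact h
  have e41 : coeff (d 1 1) A = 0 := by
    have h := key 4 1; rw [L2 4 1 (by omega)] at h; norm_num at h
    exact h
  have e05 : coeff (d 0 0) B = 0 := by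
    have h := key 0 5; rw [L2 0 5 (by omega)] at h; norm_num at h
    exact h
  have e06 : coeff (d 0 1) B = 0 := by
    have h := key 0 6; rw [L2 0 6 (by omega)] at h; norm_num at h
    exact h
  have e07 : coeff (d 0 2) B = 0 := by
    have h := key 0 7; rw [L2 0 7 (by omega)] at h; norm_num at h
    exact h
  intro i
  rw [← L1 i]
  have hu := i.1.isLt
  have hv := i.2.isLt
  set u := (i.1 : ℕ) with hu'
  set v := (i.2 : ℕ) with hv'
  interval_cases u <;> interval_cases v <;>
    (rw [key]; norm_num [e30, e31, e40, e41, e05, e06, e07])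

end W10
end

/-- For every `a` with `a² ≠ 4`, the Milnor ring
`ℂ[x,y]/(4x³ + 2axy³, 3ax²y² + 6y⁵)` of `W₁,₀ = x⁴ + ax²y³ + y⁶` has dimension 15. -/
theorem milnor_ring_W10_dim (a : ℂ) (ha : a ^ 2 ≠ 4) :
    FiniteDimensional ℂ (MvPolynomial (Fin 2) ℂ ⧸
      Ideal.span ({(4 : MvPolynomial (Fin 2) ℂ) * X 0 ^ 3 + 2 * C a * X 0 * X 1 ^ 3,
        3 * C a * X 0 ^ 2 * X 1 ^ 2 + 6 * X 1 ^ 5} : Set (MvPolynomial (Fin 2) ℂ))) ∧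
    Module.finrank ℂ (MvPolynomial (Fin 2) ℂ ⧸
      Ideal.span ({(4 : MvPolynomial (Fin 2) ℂ) * X 0 ^ 3 + 2 * C a * X 0 * X 1 ^ 3,
        3 * C a * X 0 ^ 2 * X 1 ^ 2 + 6 * X 1 ^ 5} : Set (MvPolynomial (Fin 2) ℂ))) = 15 := by
  have hI : Ideal.span ({(4 : MvPolynomial (Fin 2) ℂ) * X 0 ^ 3 + 2 * C a * X 0 * X 1 ^ 3,
        3 * C a * X 0 ^ 2 * X 1 ^ 2 + 6 * X 1 ^ 5} : Set (MvPolynomial (Fin 2) ℂ)) = W10.I a := rfl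
  rw [hI]
  have hBasis : Module.Basis (Fin 3 × Fin 5) ℂ (MvPolynomial (Fin 2) ℂ ⧸ W10.I a) :=
    Module.Basis.mk W10.indep (W10.span_top ha)
  refine ⟨Module.Basis.finiteDimensional_of_finite hBasis, ?_⟩
  rw [Module.finrank_eq_card_basis hBasis]
  simp
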